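/- For every fixed q ≥ 1 and ε > 0, there exist n ≥ 2q and an additive valuation v such that NS_{n,q}(v) ≤ (2/3 + ε)·MMS_n(v). Concretely, with k = ⌈1/(2ε)⌉, n = (4^{k+1}−1)/3, and items consisting for each a ∈ {0,...,k} of 4^a 'large' items of value 1 − a/(2k) and 2·4^a 'small' items of value a/(2k) each, the nested share NS_{n,1}(v) equals 1 while MMS_n(v) ≥ 3/2 − ε. -/

import Mathlib

/-- The maximin share for `n` agents of the additive valuation on `Fin m` with item
values `w` (items indexed in non-increasing value order). -/
noncomputable def MMSn (n m : ℕ) (w : Fin m → ℝ) : ℝ :=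
  sSup {x : ℝ | ∃ P : Fin n → Finset (Fin m),
    (∀ i j, i ≠ j → Disjoint (P i) (P j)) ∧
    Finset.univ.biUnion P = Finset.univ ∧
    ∀ j, x ≤ ∑ i ∈ P j, w i}

/-- The nested share `NS_{n,q}` of the additive valuation on `Fin m` with item values
`w` sorted in non-increasing order: the best min-bundle value over partitions obtained
by choosing `k` with `n - q < k ≤ m`, a consecutive partition of the prefix
`{e_1,…,e_k}` given by monotone cutpoints `z` (with `z 0 = 0`, `z n = k`, and the first
`n - q` blocks singletons, i.e. `z j = j` for `j ≤ n - q`), and a consecutive partition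
of the suffix given by monotone cutpoints `t` (with `t 0 = k`, `t n = m`) assigned to
the bundles in reverse order; bundle `j` (0-based) consists of the prefix block
`[z j, z (j+1))` together with the suffix block `[t (n-1-j), t (n-j))`. -/
noncomputable def NS (n q m : ℕ) (w : Fin m → ℝ) : ℝ :=
  sSup {x : ℝ | ∃ (k : ℕ) (z t : ℕ → ℕ),
    n - q < k ∧ k ≤ m ∧
    Monotone z ∧ z 0 = 0 ∧ z n = k ∧ (∀ j, j ≤ n - q → z j = j) ∧
    Monotone t ∧ t 0 = k ∧ t n = m ∧
    ∀ j : Fin n, x ≤ ∑ i ∈ Finset.univ.filter (fun i : Fin m =>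
      (z j.val ≤ i.val ∧ i.val < z (j.val + 1)) ∨
      (t (n - 1 - j.val) ≤ i.val ∧ i.val < t (n - j.val))), w i}


namespace NSaux

/-- group function: `g i = log₄ (3i+1)` -/
def g (i : ℕ) : ℕ := Nat.log 4 (3 * i + 1)

lemma g_mono {i j : ℕ} (h : i ≤ j) : g i ≤ g j :=
  Nat.log_mono_right (by omega)

lemma g_eq {a i : ℕ} (h1 : 4^a ≤ 3*i+1) (h2 : 3*i+1 < 4^(a+1)) : g i = a :=
  Nat.log_eq_of_pow_le_of_lt_pow h1 h2

lemma g_zero : g 0 = 0 := by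
  have : (3*0+1) < 4^(0+1) := by norm_num
  exact g_eq (by norm_num) this

lemma g_one : g 1 = 1 := g_eq (by norm_num) (by norm_num)

lemma g_lt_of {a i : ℕ} (h : 3*i+1 < 4^(a+1)) : g i ≤ a := by
  have := Nat.log_lt_of_lt_pow (y := 3*i+1) (b := 4) (by omega) h
  unfold g; omega

lemma pow4mod3 (a : ℕ) : 4^a % 3 = 1 := by
  induction a with
  | zero => rfl
  | succ b ih => rw [pow_succ]; omega

lemma g_low (r : ℕ) : 4 ^ g (r/2) ≤ 3*(r/2)+1 :=
  Nat.pow_log_le_self 4 (by omega)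

lemma g_high (r : ℕ) : 3*(r/2)+1 < 4 ^ (g (r/2) + 1) :=
  Nat.lt_pow_succ_log_self (by norm_num) _

lemma g_pair1 (r : ℕ) : g (2*r+1) = g (r/2) + 1 := by
  have h1 := g_low r
  have h2 := g_high r
  set c := g (r/2) with hc
  have e1 : 4^(c+1) = 4*4^c := by ring
  have e2 : 4^(c+2) = 16*4^c := by ring
  have e3 : 4^(c+1) % 3 = 1 := pow4mod3 _
  apply g_eq <;> omega

lemma g_pair2 (r : ℕ) : g (2*r+2) = g (r/2) + 1 := by
  have h1 := g_low r
  have h2 := g_high r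
  set c := g (r/2) with hc
  have e1 : 4^(c+1) = 4*4^c := by ring
  have e2 : 4^(c+2) = 16*4^c := by ring
  have e3 : 4^(c+1) % 3 = 1 := pow4mod3 _
  apply g_eq <;> omega

/-- `bK K = (4^(K+1)-1)/3`, the number of large items of groups `≤ K`. -/
def bK : ℕ → ℕ
  | 0 => 1
  | (K+1) => 4 * bK K + 1

lemma bK_eq (K : ℕ) : 3 * bK K + 1 = 4^(K+1) := by
  induction K with
  | zero => rfl
  | succ L ih => show 3 * (4 * bK L + 1) + 1 = 4^(L+2); rw [pow_succ]; omega

lemma bK_ge (K : ℕ) : K + 1 ≤ bK K := by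
  induction K with
  | zero => exact le_refl 1
  | succ L ih => show L + 2 ≤ 4 * bK L + 1; omega

lemma bK_pos (K : ℕ) : 1 ≤ bK K := by have := bK_ge K; omega

/-- number of agents -/
def nn (K : ℕ) : ℕ := 4 * bK K + 1

lemma nn_pos (K : ℕ) : 1 ≤ nn K := by unfold nn; omega

/-- the item values -/
noncomputable def ww (K : ℕ) : Fin (3 * nn K) → ℝ := fun i =>
  if (i : ℕ) < nn K then 1 - (g i : ℝ) / (2*(K+1))
  else (g ((3 * nn K - 1 - (i:ℕ)) / 2) : ℝ) / (2*(K+1))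

lemma g_le_top {K i : ℕ} (h : i < nn K) : g i ≤ K + 1 := by
  apply g_lt_of
  have hb := bK_eq K
  have : 4^(K+1+1) = 4 * 4^(K+1) := by ring
  unfold nn at h
  omega

lemma g_ge_b {K i : ℕ} (h : bK K ≤ i) : K + 1 ≤ g i := by
  have hb := bK_eq K
  have hp : 4^(K+1+1) = 4 * 4^(K+1) := by ring
  have : g (bK K) = K + 1 := g_eq (by omega) (by omega)
  calc K + 1 = g (bK K) := this.symm
    _ ≤ g i := g_mono h


lemma den_pos (K : ℕ) : (0:ℝ) < 2*(K+1) := by positivity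

lemma ww_nonneg (K : ℕ) : ∀ i, 0 ≤ ww K i := by
  intro i
  unfold ww
  split_ifs with h
  · have hg : g (i:ℕ) ≤ K + 1 := g_le_top h
    have h1 : (g (i:ℕ) : ℝ) / (2*(K+1)) ≤ (K+1 : ℝ)/(2*(K+1)) := by
      gcongr
      exact_mod_cast hg
    have h2 : ((K:ℝ)+1)/(2*((K:ℝ)+1)) = 1/2 := by
      field_simp
    push_cast at h1 ⊢
    nlinarith [h1, h2]
  · positivity

lemma ww_small_le_half (K : ℕ) {i : Fin (3 * nn K)} (h : nn K ≤ (i:ℕ)) :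
    ww K i ≤ 1/2 := by
  unfold ww
  rw [if_neg (by omega)]
  have hle : (3 * nn K - 1 - (i:ℕ)) / 2 < nn K := by
    have := nn_pos K; omega
  have hg : g ((3 * nn K - 1 - (i:ℕ)) / 2) ≤ K + 1 := g_le_top hle
  have h1 : (g ((3 * nn K - 1 - (i:ℕ)) / 2) : ℝ) / (2*(K+1)) ≤ (K+1 : ℝ)/(2*(K+1)) := by
    gcongr
    exact_mod_cast hg
  have h2 : ((K:ℝ)+1)/(2*((K:ℝ)+1)) = 1/2 := by field_simp
  push_cast at h1 ⊢
  nlinarith [h1, h2]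

lemma ww_le_half (K : ℕ) {i : Fin (3 * nn K)} (h : bK K ≤ (i:ℕ)) :
    ww K i ≤ 1/2 := by
  by_cases hn : (i:ℕ) < nn K
  · unfold ww
    rw [if_pos hn]
    have hg : K + 1 ≤ g (i:ℕ) := g_ge_b h
    have h1 : ((K:ℝ)+1)/(2*((K:ℝ)+1)) ≤ (g (i:ℕ) : ℝ) / (2*(K+1)) := by
      apply div_le_div_of_nonneg_right ?_ (le_of_lt (den_pos K))
      exact_mod_cast hg
    have h2 : ((K:ℝ)+1)/(2*((K:ℝ)+1)) = 1/2 := by field_simp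
    push_cast at h1 ⊢
    nlinarith [h1, h2]
  · exact ww_small_le_half K (by omega)

/-- values of items with index `≥ 3n-2j-2` are at most `g j/(2(K+1))`. -/
lemma ww_tail_le (K : ℕ) {j : ℕ} (hj : j < nn K) {i : Fin (3 * nn K)}
    (h : 3 * nn K - 2*j - 2 ≤ (i:ℕ)) :
    ww K i ≤ (g j : ℝ) / (2*(K+1)) := by
  have hi : (i:ℕ) < 3 * nn K := i.isLt
  have hn : nn K ≤ (i:ℕ) := by omega
  unfold ww
  rw [if_neg (by omega)]
  have hgle : g ((3 * nn K - 1 - (i:ℕ)) / 2) ≤ g j := g_mono (by omega)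
  apply div_le_div_of_nonneg_right ?_ (le_of_lt (den_pos K))
  exact_mod_cast hgle

lemma ww_large_eq (K : ℕ) {i : Fin (3 * nn K)} (h : (i:ℕ) < nn K) :
    ww K i = 1 - (g (i:ℕ) : ℝ) / (2*(K+1)) := by unfold ww; rw [if_pos h]

lemma ww_small_eq (K : ℕ) {i : Fin (3 * nn K)} (h : nn K ≤ (i:ℕ)) :
    ww K i = (g ((3 * nn K - 1 - (i:ℕ)) / 2) : ℝ) / (2*(K+1)) := by
  unfold ww; rw [if_neg (by omega)]

lemma ww_anti (K : ℕ) : ∀ i j : Fin (3 * nn K), i ≤ j → ww K j ≤ ww K i := by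
  intro i j hij
  have hij' : (i:ℕ) ≤ (j:ℕ) := hij
  by_cases hi : (i:ℕ) < nn K
  · by_cases hj : (j:ℕ) < nn K
    · rw [ww_large_eq K hi, ww_large_eq K hj]
      have := g_mono hij'
      have : (g (i:ℕ) : ℝ) ≤ g (j:ℕ) := by exact_mod_cast this
      have hd := den_pos K
      gcongr
    · calc ww K j ≤ 1/2 := ww_small_le_half K (by omega)
        _ ≤ ww K i := by
          rw [ww_large_eq K hi]
          have hg : g (i:ℕ) ≤ K + 1 := g_le_top hi
          have h1 : (g (i:ℕ) : ℝ) / (2*(K+1)) ≤ (K+1 : ℝ)/(2*(K+1)) := by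
            gcongr; exact_mod_cast hg
          have h2 : ((K:ℝ)+1)/(2*((K:ℝ)+1)) = 1/2 := by field_simp
          push_cast at h1 ⊢
          nlinarith [h1, h2]
  · rw [ww_small_eq K (by omega), ww_small_eq K (by omega)]
    have hg : g ((3 * nn K - 1 - (j:ℕ)) / 2) ≤ g ((3 * nn K - 1 - (i:ℕ)) / 2) :=
      g_mono (by omega)
    apply div_le_div_of_nonneg_right ?_ (le_of_lt (den_pos K))
    exact_mod_cast hg

/-- interval of `Fin N` -/
def Iv (N lo hi : ℕ) : Finset (Fin N) :=
  Finset.univ.filter (fun i => lo ≤ (i:ℕ) ∧ (i:ℕ) < hi)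

lemma mem_Iv {N lo hi : ℕ} {i : Fin N} : i ∈ Iv N lo hi ↔ lo ≤ (i:ℕ) ∧ (i:ℕ) < hi := by
  simp [Iv]

lemma card_Iv (N lo hi : ℕ) : (Iv N lo hi).card ≤ hi - lo := by
  have h1 : (Iv N lo hi).card = ((Iv N lo hi).image Fin.val).card :=
    (Finset.card_image_of_injective _ Fin.val_injective).symm
  have h2 : (Iv N lo hi).image Fin.val ⊆ Finset.Ico lo hi := by
    intro a ha
    simp only [Finset.mem_image] at ha
    obtain ⟨x, hx, rfl⟩ := ha
    rw [mem_Iv] at hx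
    simp [Finset.mem_Ico]; omega
  calc (Iv N lo hi).card = ((Iv N lo hi).image Fin.val).card := h1
    _ ≤ (Finset.Ico lo hi).card := Finset.card_le_card h2
    _ = hi - lo := Nat.card_Ico lo hi

lemma card_Iv' (N lo hi : ℕ) :
    (Finset.univ.filter (fun i : Fin N => lo ≤ (i:ℕ) ∧ (i:ℕ) < hi)).card ≤ hi - lo :=
  card_Iv N lo hi

lemma Iv_singleton (N j : ℕ) (h : j < N) : Iv N j (j+1) = {⟨j, h⟩} := by
  ext i
  rw [mem_Iv]
  simp [Fin.ext_iff]
  omega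


lemma g_pos {j : ℕ} (h : 1 ≤ j) : 1 ≤ g j := by
  have := g_mono h
  rw [g_one] at this
  exact this

set_option maxHeartbeats 2000000 in
lemma NS_le_one (K q : ℕ) (hq : 1 ≤ q) (hq2 : q ≤ 3 * bK K + 1)
    (x : ℝ) (k' : ℕ) (z t : ℕ → ℕ)
    (hk1 : nn K - q < k') (hk2 : k' ≤ 3 * nn K)
    (hzm : Monotone z) (hz0 : z 0 = 0) (hzn : z (nn K) = k')
    (hzf : ∀ j, j ≤ nn K - q → z j = j)
    (htm : Monotone t) (ht0 : t 0 = k') (htn : t (nn K) = 3 * nn K)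
    (hb : ∀ j : Fin (nn K), x ≤ ∑ i ∈ Finset.univ.filter (fun i : Fin (3 * nn K) =>
      (z j.val ≤ i.val ∧ i.val < z (j.val + 1)) ∨
      (t (nn K - 1 - j.val) ≤ i.val ∧ i.val < t (nn K - j.val))), ww K i) :
    x ≤ 1 := by
  by_contra hx
  push_neg at hx
  set n := nn K with hn
  set b := bK K with hbdef
  have hnb : n = 4 * b + 1 := rfl
  have hbpos : 1 ≤ b := bK_pos K
  have hbq : b ≤ n - q := by omega
  have hzb : z b = b := hzf b hbq
  -- invariant 1 : the top bundles
  have inv1 : ∀ d, d ≤ n - b → 3*d + z (n - d) ≤ t d := by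
    intro d
    induction d with
    | zero =>
      intro _
      simp only [Nat.sub_zero, hzn, ht0, Nat.mul_zero, Nat.zero_add, le_refl]
    | succ d ih =>
      intro hd
      have ihd := ih (by omega)
      have jlt : n - d - 1 < n := by omega
      have hb0 := hb ⟨n - d - 1, jlt⟩
      simp only [Fin.val_mk] at hb0
      rw [show n - 1 - (n - d - 1) = d by omega, show n - (n - d - 1) = d + 1 by omega,
        show n - d - 1 + 1 = n - d by omega] at hb0
      rw [Finset.filter_or] at hb0
      set F := (Finset.univ.filter (fun i : Fin (3*n) => z (n-d-1) ≤ (i:ℕ) ∧ (i:ℕ) < z (n-d))) ∪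
        (Finset.univ.filter (fun i : Fin (3*n) => t d ≤ (i:ℕ) ∧ (i:ℕ) < t (d+1))) with hF
      have hhalf : ∀ i ∈ F, ww K i ≤ 1/2 := by
        intro i hi
        rw [hF, Finset.mem_union, Finset.mem_filter, Finset.mem_filter] at hi
        have hble : b ≤ (i:ℕ) := by
          rcases hi with ⟨_, h1, _⟩ | ⟨_, h1, _⟩
          · have : z b ≤ z (n - d - 1) := hzm (by omega)
            omega
          · have : t 0 ≤ t d := htm (by omega)
            omega
        exact ww_le_half K hble
      have hcard : F.card ≤ (z (n-d) - z (n-d-1)) + (t (d+1) - t d) := by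
        calc F.card ≤ _ + _ := Finset.card_union_le _ _
          _ ≤ (z (n-d) - z (n-d-1)) + (t (d+1) - t d) := by
            gcongr
            · exact card_Iv' (3*n) _ _
            · exact card_Iv' (3*n) _ _
      have hsum : (∑ i ∈ F, ww K i) ≤ F.card * (1/2) := by
        have := Finset.sum_le_card_nsmul F (ww K) (1/2) hhalf
        rwa [nsmul_eq_mul] at this
      have hc3 : 3 ≤ F.card := by
        by_contra hcc
        push_neg at hcc
        have : (F.card : ℝ) ≤ 2 := by exact_mod_cast Nat.lt_succ_iff.mp hcc
        nlinarith [hb0, hx]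
      have hzmono : z (n-d-1) ≤ z (n-d) := hzm (by omega)
      have htmono : t d ≤ t (d+1) := htm (by omega)
      rw [show n - (d+1) = n - d - 1 by omega]
      omega
  -- invariant 2 : the singleton region
  have inv2 : ∀ e, e < b → 3*n - 2*(b - e) ≤ t (n - (b - e)) := by
    intro e
    induction e with
    | zero =>
      intro _
      have h1 := inv1 (n - b) (le_refl _)
      rw [show n - (n - b) = b by omega, hzb] at h1
      simp only [Nat.sub_zero]
      omega
    | succ e ih =>
      intro he
      have ihd := ih (by omega)
      set j := b - e - 1 with hj
      have hj1 : 1 ≤ j := by omega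
      have hjb : j < b := by omega
      have jlt : j < n := by omega
      have jm : j < 3*n := by omega
      have hb0 := hb ⟨j, jlt⟩
      simp only [Fin.val_mk] at hb0
      rw [hzf j (by omega), hzf (j+1) (by omega)] at hb0
      rw [show n - (b - e) = n - 1 - j by omega] at ihd
      rw [Finset.filter_or] at hb0
      have hIv1 : (Finset.univ.filter (fun i : Fin (3*n) => j ≤ (i:ℕ) ∧ (i:ℕ) < j+1))
          = {(⟨j, jm⟩ : Fin (3*n))} := Iv_singleton (3*n) j jm
      set I2 := Finset.univ.filter
        (fun i : Fin (3*n) => t (n-1-j) ≤ (i:ℕ) ∧ (i:ℕ) < t (n-j)) with hI2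
      have hdisj : Disjoint {(⟨j, jm⟩ : Fin (3*n))} I2 := by
        rw [Finset.disjoint_left]
        intro a ha ha2
        rw [Finset.mem_singleton] at ha
        rw [hI2, Finset.mem_filter] at ha2
        have h1 : t 0 ≤ t (n-1-j) := htm (by omega)
        subst ha
        simp only [Fin.val_mk] at ha2
        omega
      rw [hIv1, Finset.sum_union hdisj, Finset.sum_singleton] at hb0
      have hwj : ww K ⟨j, jm⟩ = 1 - (g j : ℝ) / (2*(K+1)) := ww_large_eq K (by simpa using jlt)
      set v := (g j : ℝ) / (2*(K+1)) with hv
      have hvpos : 0 < v := by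
        rw [hv]
        apply div_pos _ (den_pos K)
        exact_mod_cast g_pos hj1
      have hI2le : ∀ i ∈ I2, ww K i ≤ v := by
        intro i hi
        rw [hI2, Finset.mem_filter] at hi
        apply ww_tail_le K jlt
        omega
      have hsum2 : (∑ i ∈ I2, ww K i) ≤ I2.card * v := by
        have := Finset.sum_le_card_nsmul I2 (ww K) v hI2le
        rwa [nsmul_eq_mul] at this
      have hlb : v < ∑ i ∈ I2, ww K i := by
        rw [hwj] at hb0
        nlinarith [hb0, hx]
      have hc2 : 2 ≤ I2.card := by
        by_contra hcc
        push_neg at hcc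
        have : (I2.card : ℝ) ≤ 1 := by exact_mod_cast Nat.lt_succ_iff.mp hcc
        nlinarith [hsum2, hlb, hvpos]
      have hcard2 : I2.card ≤ t (n-j) - t (n-1-j) := by
        rw [hI2]; exact card_Iv' (3*n) _ _
      have htmono : t (n-1-j) ≤ t (n-j) := htm (by omega)
      rw [show b - (e+1) = j by omega]
      omega
  -- conclude with bundle 0
  have ht1 : 3*n - 2 ≤ t (n-1) := by
    have := inv2 (b-1) (by omega)
    rw [show b - (b-1) = 1 by omega] at this
    omega
  have npos : 0 < n := nn_pos K
  have hb0 := hb ⟨0, npos⟩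
  simp only [Fin.val_mk] at hb0
  rw [hz0, hzf 1 (by omega), show n - 1 - 0 = n - 1 by omega, show n - 0 = n by omega,
    htn] at hb0
  rw [Finset.filter_or] at hb0
  have h0m : 0 < 3*n := by omega
  have hIv1 : (Finset.univ.filter (fun i : Fin (3*n) => 0 ≤ (i:ℕ) ∧ (i:ℕ) < 1))
      = {(⟨0, h0m⟩ : Fin (3*n))} := Iv_singleton (3*n) 0 h0m
  set I2 := Finset.univ.filter
    (fun i : Fin (3*n) => t (n-1) ≤ (i:ℕ) ∧ (i:ℕ) < 3*n) with hI2
  have hdisj : Disjoint {(⟨0, h0m⟩ : Fin (3*n))} I2 := by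
    rw [Finset.disjoint_left]
    intro a ha ha2
    rw [Finset.mem_singleton] at ha
    rw [hI2, Finset.mem_filter] at ha2
    subst ha
    simp only [Fin.val_mk] at ha2
    omega
  rw [hIv1, Finset.sum_union hdisj, Finset.sum_singleton] at hb0
  have hw0 : ww K ⟨0, h0m⟩ = 1 := by
    rw [ww_large_eq K (by simpa using npos)]
    simp [g_zero]
  have hI2le : ∀ i ∈ I2, ww K i ≤ 0 := by
    intro i hi
    rw [hI2, Finset.mem_filter] at hi
    have := ww_tail_le K (j := 0) npos (i := i) (by omega)
    rwa [g_zero, Nat.cast_zero, zero_div] at this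
  have hsum2 : (∑ i ∈ I2, ww K i) ≤ 0 := Finset.sum_nonpos hI2le
  rw [hw0] at hb0
  nlinarith [hb0, hx, hsum2]


set_option maxHeartbeats 1000000 in
lemma NS_mem (K q : ℕ) (hq : 1 ≤ q) :
    ∃ (k : ℕ) (z t : ℕ → ℕ),
      nn K - q < k ∧ k ≤ 3 * nn K ∧ Monotone z ∧ z 0 = 0 ∧ z (nn K) = k ∧
      (∀ j, j ≤ nn K - q → z j = j) ∧ Monotone t ∧ t 0 = k ∧ t (nn K) = 3 * nn K ∧
      ∀ j : Fin (nn K), (1:ℝ) ≤ ∑ i ∈ Finset.univ.filter (fun i : Fin (3 * nn K) =>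
        (z j.val ≤ i.val ∧ i.val < z (j.val + 1)) ∨
        (t (nn K - 1 - j.val) ≤ i.val ∧ i.val < t (nn K - j.val))), ww K i := by
  have npos := nn_pos K
  refine ⟨nn K, id, fun u => nn K + 2*u, by omega, by omega, monotone_id, rfl, rfl,
    fun j _ => rfl, fun a b h => by show nn K + 2*a ≤ nn K + 2*b; omega,
    by show nn K + 2*0 = nn K; omega, by show nn K + 2*nn K = 3*nn K; omega, ?_⟩
  set n := nn K with hn
  intro j
  have hj : (j:ℕ) < n := j.isLt
  have h1 : (j:ℕ) < 3*n := by omega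
  have h2 : 3*n - 2 - 2*(j:ℕ) < 3*n := by omega
  have h3 : 3*n - 1 - 2*(j:ℕ) < 3*n := by omega
  set a1 : Fin (3*n) := ⟨(j:ℕ), h1⟩
  set a2 : Fin (3*n) := ⟨3*n - 2 - 2*(j:ℕ), h2⟩
  set a3 : Fin (3*n) := ⟨3*n - 1 - 2*(j:ℕ), h3⟩
  have hne12 : a1 ≠ a2 := Fin.ne_of_val_ne (by show (j:ℕ) ≠ 3*n - 2 - 2*(j:ℕ); omega)
  have hne13 : a1 ≠ a3 := Fin.ne_of_val_ne (by show (j:ℕ) ≠ 3*n - 1 - 2*(j:ℕ); omega)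
  have hne23 : a2 ≠ a3 := Fin.ne_of_val_ne
    (by show 3*n - 2 - 2*(j:ℕ) ≠ 3*n - 1 - 2*(j:ℕ); omega)
  set T : Finset (Fin (3*n)) := insert a1 (insert a2 {a3}) with hT
  have hsub : T ⊆ Finset.univ.filter (fun i : Fin (3 * n) =>
      (id (j:ℕ) ≤ i.val ∧ i.val < id ((j:ℕ) + 1)) ∨
      ((fun u => n + 2*u) (n - 1 - (j:ℕ)) ≤ i.val ∧
        i.val < (fun u => n + 2*u) (n - (j:ℕ)))) := by
    intro i hi
    rw [hT] at hi
    simp only [Finset.mem_insert, Finset.mem_singleton] at hi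
    rw [Finset.mem_filter]
    refine ⟨Finset.mem_univ _, ?_⟩
    rcases hi with rfl | rfl | rfl
    · left
      exact ⟨le_refl _, by show (j:ℕ) < (j:ℕ) + 1; omega⟩
    · right
      constructor
      · show n + 2*(n - 1 - (j:ℕ)) ≤ 3*n - 2 - 2*(j:ℕ); omega
      · show 3*n - 2 - 2*(j:ℕ) < n + 2*(n - (j:ℕ)); omega
    · right
      constructor
      · show n + 2*(n - 1 - (j:ℕ)) ≤ 3*n - 1 - 2*(j:ℕ); omega
      · show 3*n - 1 - 2*(j:ℕ) < n + 2*(n - (j:ℕ)); omega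
  have hTsum : (∑ i ∈ T, ww K i) = ww K a1 + ww K a2 + ww K a3 := by
    rw [hT, Finset.sum_insert (by simp [hne12, hne13]),
      Finset.sum_insert (by simpa using hne23), Finset.sum_singleton, add_assoc]
  have hv1 : ww K a1 = 1 - (g (j:ℕ) : ℝ) / (2*(K+1)) := ww_large_eq K hj
  have e2 : (3 * nn K - 1 - (a2 : ℕ)) / 2 = (j:ℕ) := by
    show (3 * nn K - 1 - (3*n - 2 - 2*(j:ℕ))) / 2 = (j:ℕ)
    omega
  have e3 : (3 * nn K - 1 - (a3 : ℕ)) / 2 = (j:ℕ) := by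
    show (3 * nn K - 1 - (3*n - 1 - 2*(j:ℕ))) / 2 = (j:ℕ)
    omega
  have hv2 : ww K a2 = (g (j:ℕ) : ℝ) / (2*(K+1)) := by
    rw [ww_small_eq K (by show n ≤ 3*n - 2 - 2*(j:ℕ); omega), e2]
  have hv3 : ww K a3 = (g (j:ℕ) : ℝ) / (2*(K+1)) := by
    rw [ww_small_eq K (by show n ≤ 3*n - 1 - 2*(j:ℕ); omega), e3]
  have hval : (1:ℝ) ≤ ∑ i ∈ T, ww K i := by
    rw [hTsum, hv1, hv2, hv3]
    have : 0 ≤ (g (j:ℕ) : ℝ) / (2*(K+1)) := by positivity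
    linarith
  calc (1:ℝ) ≤ ∑ i ∈ T, ww K i := hval
    _ ≤ _ := Finset.sum_le_sum_of_subset_of_nonneg hsub (fun i _ _ => ww_nonneg K i)


def cc (K : ℕ) : ℕ := 2 * bK K

def assign0 (K : ℕ) (i : ℕ) : ℕ :=
  if i < 2 * cc K + 1 then (i+1)/2
  else if i < nn K + 2 then 0
  else if i < 3 * nn K - cc K then cc K + 1 + (3 * nn K - 1 - cc K - i) / 3
  else 3 * nn K - i

lemma assign0_lt (K : ℕ) (i : ℕ) (h : i < 3 * nn K) : assign0 K i < nn K := by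
  have hb := bK_pos K
  have hn : nn K = 4 * bK K + 1 := rfl
  have hc : cc K = 2 * bK K := rfl
  unfold assign0
  split_ifs <;> omega

def Pb (K : ℕ) : Fin (nn K) → Finset (Fin (3 * nn K)) :=
  fun j => Finset.univ.filter (fun i => assign0 K (i:ℕ) = (j:ℕ))

lemma Pb_disj (K : ℕ) : ∀ i j, i ≠ j → Disjoint (Pb K i) (Pb K j) := by
  intro i j hij
  rw [Finset.disjoint_left]
  intro a ha ha'
  rw [Pb, Finset.mem_filter] at ha ha'
  apply hij
  apply Fin.ext
  rw [← ha.2, ← ha'.2]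

lemma Pb_cover (K : ℕ) : Finset.univ.biUnion (Pb K) = Finset.univ := by
  ext i
  simp only [Finset.mem_biUnion, Finset.mem_univ, iff_true, true_and]
  exact ⟨⟨assign0 K (i:ℕ), assign0_lt K _ i.isLt⟩, by rw [Pb, Finset.mem_filter]; exact ⟨Finset.mem_univ _, rfl⟩⟩

lemma half_eq (K : ℕ) : ((K:ℝ)+1)/(2*((K:ℝ)+1)) = 1/2 := by field_simp

lemma g_top (K : ℕ) : g (nn K - 1) = K + 1 := by
  have h1 : K + 1 ≤ g (nn K - 1) := g_ge_b (by have := bK_pos K; show bK K ≤ nn K - 1; show _ ≤ 4*bK K + 1 - 1; omega)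
  have h2 : g (nn K - 1) ≤ K + 1 := g_le_top (by have := nn_pos K; omega)
  omega

lemma ww_half_of (K : ℕ) {i : Fin (3 * nn K)} (hlo : nn K ≤ (i:ℕ))
    (hhi : bK K ≤ (3 * nn K - 1 - (i:ℕ)) / 2) : ww K i = 1/2 := by
  rw [ww_small_eq K hlo]
  have h1 : K + 1 ≤ g ((3 * nn K - 1 - (i:ℕ)) / 2) := g_ge_b hhi
  have h2 : g ((3 * nn K - 1 - (i:ℕ)) / 2) ≤ K + 1 := g_le_top (by have := nn_pos K; omega)
  have : g ((3 * nn K - 1 - (i:ℕ)) / 2) = K + 1 := by omega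
  rw [this]
  push_cast
  exact half_eq K

set_option maxHeartbeats 2000000 in
lemma Pb_bound (K : ℕ) :
    ∀ j : Fin (nn K), (3/2 : ℝ) - 1/(2*(K+1)) ≤ ∑ i ∈ Pb K j, ww K i := by
  have hb := bK_pos K
  have hn : nn K = 4 * bK K + 1 := rfl
  have hc : cc K = 2 * bK K := rfl
  have hd := den_pos K
  have hδ : (0:ℝ) < 1/(2*((K:ℝ)+1)) := by positivity
  set n := nn K with hndef
  set c := cc K with hcdef
  intro j
  have hjlt : (j:ℕ) < n := j.isLt
  have key : ∀ (x y zz : Fin (3*n)), x ≠ y → x ≠ zz → y ≠ zz →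
      assign0 K (x:ℕ) = (j:ℕ) → assign0 K (y:ℕ) = (j:ℕ) → assign0 K (zz:ℕ) = (j:ℕ) →
      (3/2 : ℝ) - 1/(2*(K+1)) ≤ ww K x + ww K y + ww K zz →
      (3/2 : ℝ) - 1/(2*(K+1)) ≤ ∑ i ∈ Pb K j, ww K i := by
    intro x y zz hxy hxz hyz hax hay haz hval
    have hsub : insert x (insert y {zz}) ⊆ Pb K j := by
      intro i hi
      simp only [Finset.mem_insert, Finset.mem_singleton] at hi
      rw [Pb, Finset.mem_filter]
      rcases hi with rfl | rfl | rfl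
      · exact ⟨Finset.mem_univ _, hax⟩
      · exact ⟨Finset.mem_univ _, hay⟩
      · exact ⟨Finset.mem_univ _, haz⟩
    have hsum : (∑ i ∈ insert x (insert y {zz}), ww K i) = ww K x + ww K y + ww K zz := by
      rw [Finset.sum_insert (by simp [hxy, hxz]),
        Finset.sum_insert (by simpa using hyz), Finset.sum_singleton, add_assoc]
    calc (3/2 : ℝ) - 1/(2*(K+1)) ≤ ww K x + ww K y + ww K zz := hval
      _ = ∑ i ∈ insert x (insert y {zz}), ww K i := hsum.symm
      _ ≤ ∑ i ∈ Pb K j, ww K i :=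
        Finset.sum_le_sum_of_subset_of_nonneg hsub (fun i _ _ => ww_nonneg K i)
  rcases Nat.lt_or_ge (j:ℕ) 1 with hj0 | hj1
  · -- bundle 0
    have hj : (j:ℕ) = 0 := by omega
    apply key ⟨0, by omega⟩ ⟨n, by omega⟩ ⟨n+1, by omega⟩
      (Fin.ne_of_val_ne (by show (0:ℕ) ≠ n; omega))
      (Fin.ne_of_val_ne (by show (0:ℕ) ≠ n+1; omega))
      (Fin.ne_of_val_ne (by show n ≠ n+1; omega))
    · show assign0 K 0 = (j:ℕ); unfold assign0; split_ifs <;> omega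
    · show assign0 K n = (j:ℕ); unfold assign0; split_ifs <;> omega
    · show assign0 K (n+1) = (j:ℕ); unfold assign0; split_ifs <;> omega
    · have h1 : ww K ⟨0, by omega⟩ = 1 := by
        rw [ww_large_eq K (by show (0:ℕ) < n; omega)]
        simp [g_zero]
      have h2 : ww K ⟨n, by omega⟩ = 1/2 :=
        ww_half_of K (by show n ≤ n; omega) (by show bK K ≤ (3*n-1-n)/2; omega)
      have h3 : ww K ⟨n+1, by omega⟩ = 1/2 :=
        ww_half_of K (by show n ≤ n+1; omega) (by show bK K ≤ (3*n-1-(n+1))/2; omega)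
      rw [h1, h2, h3]
      linarith
  · rcases Nat.lt_or_ge (j:ℕ) (c+1) with hjc | hjc
    · -- pair bundle, 1 ≤ j ≤ c
      set jj := (j:ℕ) with hjj
      apply key ⟨2*jj-1, by omega⟩ ⟨2*jj, by omega⟩ ⟨3*n-jj, by omega⟩
        (Fin.ne_of_val_ne (by show 2*jj-1 ≠ 2*jj; omega))
        (Fin.ne_of_val_ne (by show 2*jj-1 ≠ 3*n-jj; omega))
        (Fin.ne_of_val_ne (by show 2*jj ≠ 3*n-jj; omega))
      · show assign0 K (2*jj-1) = jj; unfold assign0; split_ifs <;> omega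
      · show assign0 K (2*jj) = jj; unfold assign0; split_ifs <;> omega
      · show assign0 K (3*n-jj) = jj; unfold assign0; split_ifs <;> omega
      · set a := g ((jj-1)/2) with ha
        have hg1 : g (2*jj-1) = a + 1 := by
          rw [show 2*jj-1 = 2*(jj-1)+1 by omega]
          exact g_pair1 (jj-1)
        have hg2 : g (2*jj) = a + 1 := by
          rw [show 2*jj = 2*(jj-1)+2 by omega]
          exact g_pair2 (jj-1)
        have h1 : ww K ⟨2*jj-1, by omega⟩ = 1 - ((a:ℝ)+1)/(2*(K+1)) := by
          rw [ww_large_eq K (by show 2*jj-1 < n; omega), hg1]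
          push_cast; ring_nf
        have h2 : ww K ⟨2*jj, by omega⟩ = 1 - ((a:ℝ)+1)/(2*(K+1)) := by
          rw [ww_large_eq K (by show 2*jj < n; omega), hg2]
          push_cast; ring_nf
        have h3 : ww K ⟨3*n-jj, by omega⟩ = (a:ℝ)/(2*(K+1)) := by
          rw [ww_small_eq K (by show n ≤ 3*n-jj; omega)]
          rw [show (3 * nn K - 1 - ((⟨3*n-jj, by omega⟩ : Fin (3*n)):ℕ)) / 2 = (jj-1)/2 from by
            show (3 * nn K - 1 - (3*n-jj)) / 2 = (jj-1)/2; omega]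
        have haK : a + 1 ≤ K + 1 := by
          rw [← hg1]
          exact g_le_top (by show 2*jj-1 < n; omega)
        have haKr : (a:ℝ) ≤ K := by exact_mod_cast Nat.lt_succ_iff.mp (by omega)
        rw [h1, h2, h3]
        have expand : (1 - ((a:ℝ)+1)/(2*(K+1))) + (1 - ((a:ℝ)+1)/(2*(K+1))) + (a:ℝ)/(2*(K+1))
            = 2 - ((a:ℝ)+2)/(2*(K+1)) := by ring
        rw [expand]
        have hq1 : ((a:ℝ)+2)/(2*((K:ℝ)+1)) ≤ ((K:ℝ)+2)/(2*((K:ℝ)+1)) :=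
          (div_le_div_iff_of_pos_right hd).mpr (by linarith)
        have hq2 : ((K:ℝ)+2)/(2*((K:ℝ)+1)) = 1/2 + 1/(2*((K:ℝ)+1)) := by
          field_simp; ring
        linarith
    · -- triple bundle
      set jj := (j:ℕ) with hjj
      have hu : jj - c - 1 ≤ 2*bK K - 1 := by omega
      set u := jj - c - 1 with hudef
      apply key ⟨3*n-1-c-3*u, by omega⟩ ⟨3*n-2-c-3*u, by omega⟩ ⟨3*n-3-c-3*u, by omega⟩
        (Fin.ne_of_val_ne (by show 3*n-1-c-3*u ≠ 3*n-2-c-3*u; omega))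
        (Fin.ne_of_val_ne (by show 3*n-1-c-3*u ≠ 3*n-3-c-3*u; omega))
        (Fin.ne_of_val_ne (by show 3*n-2-c-3*u ≠ 3*n-3-c-3*u; omega))
      · show assign0 K (3*n-1-c-3*u) = jj; unfold assign0; split_ifs <;> omega
      · show assign0 K (3*n-2-c-3*u) = jj; unfold assign0; split_ifs <;> omega
      · show assign0 K (3*n-3-c-3*u) = jj; unfold assign0; split_ifs <;> omega
      · have h1 : ww K ⟨3*n-1-c-3*u, by omega⟩ = 1/2 :=
          ww_half_of K (by show n ≤ 3*n-1-c-3*u; omega)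
            (by show bK K ≤ (3*n-1-(3*n-1-c-3*u))/2; omega)
        have h2 : ww K ⟨3*n-2-c-3*u, by omega⟩ = 1/2 :=
          ww_half_of K (by show n ≤ 3*n-2-c-3*u; omega)
            (by show bK K ≤ (3*n-1-(3*n-2-c-3*u))/2; omega)
        have h3 : ww K ⟨3*n-3-c-3*u, by omega⟩ = 1/2 :=
          ww_half_of K (by show n ≤ 3*n-3-c-3*u; omega)
            (by show bK K ≤ (3*n-1-(3*n-3-c-3*u))/2; omega)
        rw [h1, h2, h3]
        linarith

set_option maxHeartbeats 1000000 in
lemma MMS_ge (K : ℕ) : (3/2 : ℝ) - 1/(2*((K:ℝ)+1)) ≤ MMSn (nn K) (3 * nn K) (ww K) := by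
  apply le_csSup
  · refine ⟨∑ i, ww K i, ?_⟩
    rintro x ⟨P, hd, hc, hP⟩
    have h0 : (0:ℕ) < nn K := nn_pos K
    calc x ≤ ∑ i ∈ P ⟨0, h0⟩, ww K i := hP _
      _ ≤ ∑ i, ww K i := Finset.sum_le_sum_of_subset_of_nonneg
          (Finset.subset_univ _) (fun i _ _ => ww_nonneg K i)
  · exact ⟨Pb K, Pb_disj K, Pb_cover K, Pb_bound K⟩

end NSaux


/-- For every fixed `q ≥ 1` and `ε > 0`, there exist `n ≥ 2q` and an additive valuation
(given by item values `w` sorted in non-increasing order) for which the nested share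
`NS_{n,q}` equals `1` while the maximin share is at least `3/2 − ε`; in particular
`NS_{n,q} ≤ (2/3 + ε)·MMS_n`. -/
theorem ns_asymptotically_two_thirds (q : ℕ) (hq : 1 ≤ q) (ε : ℝ) (hε : 0 < ε) :
    ∃ (n m : ℕ) (w : Fin m → ℝ),
      2 * q ≤ n ∧
      (∀ i, 0 ≤ w i) ∧
      (∀ i j : Fin m, i ≤ j → w j ≤ w i) ∧
      NS n q m w = 1 ∧
      (3 / 2 : ℝ) - ε ≤ MMSn n m w ∧
      NS n q m w ≤ ((2 / 3 : ℝ) + ε) * MMSn n m w := by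
  classical
  set K := q + Nat.ceil (1/(2*ε)) with hK
  have hqK : q ≤ K := Nat.le_add_right _ _
  have hbK : K + 1 ≤ NSaux.bK K := NSaux.bK_ge K
  have hnn : NSaux.nn K = 4 * NSaux.bK K + 1 := rfl
  have hdpos : (0:ℝ) < 2*((K:ℝ)+1) := NSaux.den_pos K
  have hceil : 1/(2*ε) ≤ (K:ℝ)+1 := by
    calc 1/(2*ε) ≤ (Nat.ceil (1/(2*ε)) : ℝ) := Nat.le_ceil _
      _ ≤ (K:ℝ)+1 := by
        have : Nat.ceil (1/(2*ε)) ≤ K := by omega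
        exact_mod_cast Nat.le_succ_of_le this
  have hδε : 1/(2*((K:ℝ)+1)) ≤ ε := by
    rw [div_le_iff₀ hdpos]
    rw [div_le_iff₀ (by positivity : (0:ℝ) < 2*ε)] at hceil
    nlinarith
  have hδhalf : 1/(2*((K:ℝ)+1)) ≤ 1/2 := by
    apply div_le_div_of_nonneg_left (by norm_num) (by norm_num)
    have : (0:ℝ) ≤ (K:ℝ) := Nat.cast_nonneg K
    nlinarith
  have hδpos : (0:ℝ) < 1/(2*((K:ℝ)+1)) := by positivity
  refine ⟨NSaux.nn K, 3 * NSaux.nn K, NSaux.ww K, by omega, NSaux.ww_nonneg K,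
    NSaux.ww_anti K, ?_, ?_, ?_⟩
  case _ =>
    -- NS = 1
    apply le_antisymm
    · apply csSup_le
      · obtain ⟨k, z, t, h⟩ := NSaux.NS_mem K q hq
        exact ⟨1, k, z, t, h⟩
      · rintro x ⟨k, z, t, h1, h2, h3, h4, h5, h6, h7, h8, h9, h10⟩
        exact NSaux.NS_le_one K q hq (by omega) x k z t h1 h2 h3 h4 h5 h6 h7 h8 h9 h10
    · apply le_csSup
      · refine ⟨1, ?_⟩
        rintro x ⟨k, z, t, h1, h2, h3, h4, h5, h6, h7, h8, h9, h10⟩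
        exact NSaux.NS_le_one K q hq (by omega) x k z t h1 h2 h3 h4 h5 h6 h7 h8 h9 h10
      · obtain ⟨k, z, t, h⟩ := NSaux.NS_mem K q hq
        exact ⟨k, z, t, h⟩
  case _ =>
    have := NSaux.MMS_ge K
    linarith
  case _ =>
    have hM := NSaux.MMS_ge K
    have hNS : NS (NSaux.nn K) q (3 * NSaux.nn K) (NSaux.ww K) ≤ 1 := by
      apply csSup_le
      · obtain ⟨k, z, t, h⟩ := NSaux.NS_mem K q hq
        exact ⟨1, k, z, t, h⟩
      · rintro x ⟨k, z, t, h1, h2, h3, h4, h5, h6, h7, h8, h9, h10⟩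
        exact NSaux.NS_le_one K q hq (by omega) x k z t h1 h2 h3 h4 h5 h6 h7 h8 h9 h10
    have hpos : (0:ℝ) < 2/3 + ε := by linarith
    set M := MMSn (NSaux.nn K) (3 * NSaux.nn K) (NSaux.ww K) with hMdef
    set δ := 1/(2*((K:ℝ)+1)) with hδdef
    have step1 : (2/3+ε)*(3/2-δ) ≤ (2/3+ε)*M := mul_le_mul_of_nonneg_left hM hpos.le
    have h6 : ε*δ ≤ ε*(1/2) := mul_le_mul_of_nonneg_left hδhalf hε.le
    have step2 : (1:ℝ) ≤ (2/3+ε)*(3/2-δ) := by nlinarith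
    linarith
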